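/- Let A_n ≥ ⋯ ≥ A_1 > 0 and B_n ≥ ⋯ ≥ B_1 > 0 be positive definite n×n complex matrices (increasing in the Loewner order) and let ω_1, …, ω_n be positive real numbers. Then for every μ ∈ [0,1], (Σ_{j=1}^n ω_j) · Σ_{j=1}^n ω_j (A_j ∘ B_j) ≥ (Σ_{j=1}^n ω_j (A_j ♯_μ B_j)) ∘ (Σ_{j=1}^n ω_j (A_j ♯_{1−μ} B_j)), i.e., the difference of the two sides is positive semidefinite. -/

import Mathlib

open scoped Matrix ComplexOrder

/-- The weighted matrix geometric mean `A ♯_μ B = A^{1/2} (A^{-1/2} B A^{-1/2})^μ A^{1/2}`,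
defined via the continuous functional calculus for Hermitian matrices. -/
noncomputable def geomMean {n : ℕ} (t : ℝ) (A B : Matrix (Fin n) (Fin n) ℂ) :
    Matrix (Fin n) (Fin n) ℂ :=
  cfc Real.sqrt A *
    cfc (fun x : ℝ => x ^ t)
      (cfc (fun x : ℝ => (Real.sqrt x)⁻¹) A * B * cfc (fun x : ℝ => (Real.sqrt x)⁻¹) A) *
    cfc Real.sqrt A

section Aux
open Complex Matrix Finset
variable {n : ℕ}



lemma entry_eq (M : Matrix (Fin n) (Fin n) ℂ) (a : Fin n → ℝ) (i j : Fin n) :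
    (M * Matrix.diagonal (Complex.ofReal ∘ a) * Mᴴ) i j
      = ∑ p, (a p : ℂ) * (M i p * (starRingEnd ℂ) (M j p)) := by
  rw [mul_assoc, Matrix.mul_apply]
  refine Finset.sum_congr rfl fun p _ => ?_
  rw [Matrix.diagonal_mul, Matrix.conjTranspose_apply]
  simp only [Function.comp_apply, RCLike.star_def]
  ring

lemma sum_swap_inner (f : Fin n → Fin n → Fin n → Fin n → ℂ) :
    ∑ i, ∑ j, ∑ p, ∑ q, f i j p q = ∑ p, ∑ q, ∑ i, ∑ j, f i j p q := by
  calc ∑ i, ∑ j, ∑ p, ∑ q, f i j p q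
      = ∑ i, ∑ p, ∑ j, ∑ q, f i j p q :=
        Finset.sum_congr rfl fun i _ => Finset.sum_comm
    _ = ∑ i, ∑ p, ∑ q, ∑ j, f i j p q :=
        Finset.sum_congr rfl fun i _ => Finset.sum_congr rfl fun p _ => Finset.sum_comm
    _ = ∑ p, ∑ i, ∑ q, ∑ j, f i j p q := Finset.sum_comm
    _ = ∑ p, ∑ q, ∑ i, ∑ j, f i j p q :=
        Finset.sum_congr rfl fun p _ => Finset.sum_comm

lemma quadForm (M N : Matrix (Fin n) (Fin n) ℂ) (a b : Fin n → ℝ) (w : Fin n → ℂ) :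
    star w ⬝ᵥ (((M * Matrix.diagonal (Complex.ofReal ∘ a) * Mᴴ) ⊙
        (N * Matrix.diagonal (Complex.ofReal ∘ b) * Nᴴ)) *ᵥ w)
      = ((∑ p, ∑ q, a p * b q *
          Complex.normSq (∑ i, (starRingEnd ℂ) (w i) * M i p * N i q) : ℝ) : ℂ) := by
  push_cast
  simp only [← Complex.mul_conj, dotProduct, mulVec, hadamard_apply, entry_eq,
    Pi.star_apply, RCLike.star_def, map_sum, _root_.map_mul, Complex.conj_conj,
    Finset.sum_mul, Finset.mul_sum]
  refine Eq.trans (sum_swap_inner _) ?_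
  rw [Finset.sum_comm]
  refine Finset.sum_congr rfl fun p _ => Finset.sum_congr rfl fun q _ =>
    Eq.trans Finset.sum_comm ?_
  refine Finset.sum_congr rfl fun i _ => Finset.sum_congr rfl fun j _ => ?_
  ring
lemma geom_decomp {A B : Matrix (Fin n) (Fin n) ℂ} (hA : A.PosDef) (hB : B.PosDef) (t : ℝ) :
    ∃ (M : Matrix (Fin n) (Fin n) ℂ) (e : Fin n → ℝ), (∀ p, 0 ≤ e p) ∧
      A = M * Matrix.diagonal (Complex.ofReal ∘ fun _ => (1:ℝ)) * Mᴴ ∧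
      B = M * Matrix.diagonal (Complex.ofReal ∘ e) * Mᴴ ∧
      geomMean t A B = M * Matrix.diagonal (Complex.ofReal ∘ fun p => e p ^ t) * Mᴴ := by
  classical
  have hAH : A.IsHermitian := hA.1
  set u : Matrix (Fin n) (Fin n) ℂ := (Matrix.IsHermitian.eigenvectorUnitary hAH : Matrix (Fin n) (Fin n) ℂ) with hu
  have hu1 : star u * u = 1 := Unitary.coe_star_mul_self _
  have hu2 : u * star u = 1 := Unitary.coe_mul_star_self _
  set d : Fin n → ℝ := hAH.eigenvalues with hd
  have hdpos : ∀ i, 0 < d i := hA.eigenvalues_pos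
  have hspec : A = u * Matrix.diagonal (Complex.ofReal ∘ d) * star u := by
    rw [Matrix.star_eq_conjTranspose]; exact hAH.spectral_theorem
  have key : ∀ f g : Fin n → ℂ,
      (u * Matrix.diagonal f * star u) * (u * Matrix.diagonal g * star u)
        = u * Matrix.diagonal (fun i => f i * g i) * star u := by
    intro f g
    calc (u * Matrix.diagonal f * star u) * (u * Matrix.diagonal g * star u)
        = u * (Matrix.diagonal f * ((star u * u) * Matrix.diagonal g)) * star u := by
          simp only [mul_assoc]
      _ = u * Matrix.diagonal (fun i => f i * g i) * star u := by
          rw [hu1, one_mul, Matrix.diagonal_mul_diagonal, mul_assoc]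
  have hcfc : ∀ f : ℝ → ℝ, cfc f A = u * Matrix.diagonal (Complex.ofReal ∘ f ∘ d) * star u := by
    intro f
    rw [hAH.cfc_eq f]
    rfl
  set sA : Matrix (Fin n) (Fin n) ℂ := cfc Real.sqrt A with hsA
  set isA : Matrix (Fin n) (Fin n) ℂ := cfc (fun x : ℝ => (Real.sqrt x)⁻¹) A with hisA
  have hsAh : sA.IsHermitian := cfc_predicate Real.sqrt A
  have hisAh : isA.IsHermitian := cfc_predicate _ A
  have hsq : sA * sA = A := by
    rw [hsA, hcfc, key]
    have h1 : (fun i => (Complex.ofReal ∘ Real.sqrt ∘ d) i * (Complex.ofReal ∘ Real.sqrt ∘ d) i)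
        = Complex.ofReal ∘ d := by
      funext i
      simp only [Function.comp_apply, ← Complex.ofReal_mul, Real.mul_self_sqrt (hdpos i).le]
    rw [h1, ← hspec]
  have hone : sA * isA = 1 := by
    rw [hsA, hisA, hcfc, hcfc, key]
    have h1 : (fun i => (Complex.ofReal ∘ Real.sqrt ∘ d) i
          * (Complex.ofReal ∘ (fun x => (Real.sqrt x)⁻¹) ∘ d) i) = fun _ => (1:ℂ) := by
      funext i
      simp only [Function.comp_apply, ← Complex.ofReal_mul,
        mul_inv_cancel₀ (ne_of_gt (Real.sqrt_pos.mpr (hdpos i))), Complex.ofReal_one]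
    rw [h1, Matrix.diagonal_one, mul_one, hu2]
  have hone' : isA * sA = 1 := by
    rw [hsA, hisA, hcfc, hcfc, key]
    have h1 : (fun i => (Complex.ofReal ∘ (fun x => (Real.sqrt x)⁻¹) ∘ d) i
          * (Complex.ofReal ∘ Real.sqrt ∘ d) i) = fun _ => (1:ℂ) := by
      funext i
      simp only [Function.comp_apply, ← Complex.ofReal_mul,
        inv_mul_cancel₀ (ne_of_gt (Real.sqrt_pos.mpr (hdpos i))), Complex.ofReal_one]
    rw [h1, Matrix.diagonal_one, mul_one, hu2]
  set W : Matrix (Fin n) (Fin n) ℂ := isA * B * isA with hW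
  have hWpsd : W.PosSemidef := by
    have h := hB.posSemidef.conjTranspose_mul_mul_same isA
    rwa [hisAh.eq] at h
  have hWH : W.IsHermitian := hWpsd.1
  set v : Matrix (Fin n) (Fin n) ℂ := (Matrix.IsHermitian.eigenvectorUnitary hWH : Matrix (Fin n) (Fin n) ℂ) with hv
  have hv2 : v * star v = 1 := Unitary.coe_mul_star_self _
  set e : Fin n → ℝ := hWH.eigenvalues with he
  have hepos : ∀ i, 0 ≤ e i := hWpsd.eigenvalues_nonneg
  have hWspec : W = v * Matrix.diagonal (Complex.ofReal ∘ e) * star v := by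
    rw [Matrix.star_eq_conjTranspose]; exact hWH.spectral_theorem
  have hWcfc : ∀ f : ℝ → ℝ, cfc f W = v * Matrix.diagonal (Complex.ofReal ∘ f ∘ e) * star v := by
    intro f
    rw [hWH.cfc_eq f]
    rfl
  have hMH : (sA * v)ᴴ = star v * sA := by
    rw [Matrix.conjTranspose_mul, hsAh.eq, Matrix.star_eq_conjTranspose]
  refine ⟨sA * v, e, hepos, ?_, ?_, ?_⟩
  · have hD1 : Matrix.diagonal (Complex.ofReal ∘ fun _ : Fin n => (1:ℝ))
        = (1 : Matrix (Fin n) (Fin n) ℂ) := by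
      rw [show (Complex.ofReal ∘ fun _ : Fin n => (1:ℝ)) = fun _ => (1:ℂ) by funext; simp,
        Matrix.diagonal_one]
    rw [hD1, mul_one, hMH]
    have h2 : sA * v * (star v * sA) = sA * sA := by
      rw [mul_assoc, ← mul_assoc v, hv2, one_mul]
    rw [h2, hsq]
  · rw [hMH]
    have h2 : sA * v * Matrix.diagonal (Complex.ofReal ∘ e) * (star v * sA) = sA * W * sA := by
      rw [hWspec]; simp only [mul_assoc]
    rw [h2, hW]
    have h3 : sA * (isA * B * isA) * sA = sA * isA * B * (isA * sA) := by
      simp only [mul_assoc]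
    rw [h3, hone, hone', one_mul, mul_one]
  · show sA * cfc (fun x : ℝ => x ^ t) W * sA = _
    rw [hMH, hWcfc]
    simp only [mul_assoc]
    rfl

lemma conjForm_isHermitian (M : Matrix (Fin n) (Fin n) ℂ) (a : Fin n → ℝ) :
    (M * Matrix.diagonal (Complex.ofReal ∘ a) * Mᴴ).IsHermitian := by
  have h : star (Complex.ofReal ∘ a) = Complex.ofReal ∘ a := by
    funext i; simp [Pi.star_def]
  show _ᴴ = _
  rw [Matrix.conjTranspose_mul, Matrix.conjTranspose_mul, Matrix.conjTranspose_conjTranspose,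
    Matrix.diagonal_conjTranspose, h, mul_assoc]

lemma hadamard_isHermitian {X Y : Matrix (Fin n) (Fin n) ℂ}
    (hX : X.IsHermitian) (hY : Y.IsHermitian) : (X ⊙ Y).IsHermitian := by
  show _ᴴ = _
  ext i j
  simp only [Matrix.conjTranspose_apply, Matrix.hadamard_apply, star_mul']
  rw [show star (X j i) = X i j from congrFun (congrFun hX i) j,
    show star (Y j i) = Y i j from congrFun (congrFun hY i) j]

lemma isHermitian_smul_real {X : Matrix (Fin n) (Fin n) ℂ} (hX : X.IsHermitian) (c : ℝ) :
    (c • X).IsHermitian := by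
  show _ᴴ = _
  ext i j
  simp only [Matrix.conjTranspose_apply, Matrix.smul_apply, star_smul, star_trivial]
  rw [show star (X j i) = X i j from congrFun (congrFun hX i) j]

lemma smul_posSemidef {X : Matrix (Fin n) (Fin n) ℂ} (hX : X.PosSemidef)
    {c : ℝ} (hc : 0 ≤ c) : (c • X).PosSemidef := by
  rw [Matrix.posSemidef_iff_dotProduct_mulVec]
  constructor
  · show _ᴴ = _
    ext i j
    simp only [Matrix.conjTranspose_apply, Matrix.smul_apply, star_smul, star_trivial]
    rw [show star (X j i) = X i j from congrFun (congrFun hX.1 i) j]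
  · intro w
    rw [Matrix.smul_mulVec, dotProduct_smul]
    exact smul_nonneg hc (hX.dotProduct_mulVec_nonneg w)

lemma posSemidef_sum {ι : Type*} (s : Finset ι) (f : ι → Matrix (Fin n) (Fin n) ℂ)
    (h : ∀ i ∈ s, (f i).PosSemidef) : (∑ i ∈ s, f i).PosSemidef :=
  Finset.sum_induction f _ (fun _ _ ha hb => ha.add hb) Matrix.PosSemidef.zero h

lemma posSemidef_hadamard {X Y : Matrix (Fin n) (Fin n) ℂ}
    (hX : X.PosSemidef) (hY : Y.PosSemidef) : (X ⊙ Y).PosSemidef := by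
  have hXd : X = (Matrix.IsHermitian.eigenvectorUnitary hX.1 : Matrix (Fin n) (Fin n) ℂ)
      * Matrix.diagonal (Complex.ofReal ∘ hX.1.eigenvalues)
      * (Matrix.IsHermitian.eigenvectorUnitary hX.1 : Matrix (Fin n) (Fin n) ℂ)ᴴ := by
    rw [← Matrix.star_eq_conjTranspose]; exact hX.1.spectral_theorem
  have hYd : Y = (Matrix.IsHermitian.eigenvectorUnitary hY.1 : Matrix (Fin n) (Fin n) ℂ)
      * Matrix.diagonal (Complex.ofReal ∘ hY.1.eigenvalues)
      * (Matrix.IsHermitian.eigenvectorUnitary hY.1 : Matrix (Fin n) (Fin n) ℂ)ᴴ := by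
    rw [← Matrix.star_eq_conjTranspose]; exact hY.1.spectral_theorem
  refine Matrix.PosSemidef.of_dotProduct_mulVec_nonneg (hadamard_isHermitian hX.1 hY.1) fun w => ?_
  rw [hXd, hYd, quadForm, Complex.zero_le_real]
  refine Finset.sum_nonneg fun p _ => Finset.sum_nonneg fun q _ => ?_
  exact mul_nonneg (mul_nonneg (hX.eigenvalues_nonneg p) (hY.eigenvalues_nonneg q))
    (Complex.normSq_nonneg _)

lemma lemmaH {A B C D : Matrix (Fin n) (Fin n) ℂ} (hA : A.PosDef) (hB : B.PosDef)
    (hC : C.PosDef) (hD : D.PosDef) {μ : ℝ} (hμ0 : 0 ≤ μ) (hμ1 : μ ≤ 1) :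
    (μ • (B ⊙ C) + (1 - μ) • (A ⊙ D) - geomMean μ A B ⊙ geomMean (1 - μ) C D).PosSemidef := by
  obtain ⟨M, e, he, hAd, hBd, hGd⟩ := geom_decomp hA hB μ
  obtain ⟨N, f, hf, hCd, hDd, hHd⟩ := geom_decomp hC hD (1 - μ)
  rw [hGd, hHd, hBd, hCd, hAd, hDd]
  have hν0 : (0:ℝ) ≤ 1 - μ := by linarith
  rw [Matrix.posSemidef_iff_dotProduct_mulVec]
  constructor
  · refine Matrix.IsHermitian.sub (Matrix.IsHermitian.add ?_ ?_) ?_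
    · exact isHermitian_smul_real
        (hadamard_isHermitian (conjForm_isHermitian M e) (conjForm_isHermitian N _)) _
    · exact isHermitian_smul_real
        (hadamard_isHermitian (conjForm_isHermitian M _) (conjForm_isHermitian N f)) _
    · exact hadamard_isHermitian (conjForm_isHermitian M _) (conjForm_isHermitian N _)
  · intro w
    rw [Matrix.sub_mulVec, Matrix.add_mulVec, Matrix.smul_mulVec,
      Matrix.smul_mulVec, dotProduct_sub, dotProduct_add,
      dotProduct_smul, dotProduct_smul, quadForm, quadForm, quadForm,
      Complex.real_smul, Complex.real_smul, ← Complex.ofReal_mul, ← Complex.ofReal_mul,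
      ← Complex.ofReal_add, ← Complex.ofReal_sub, Complex.zero_le_real]
    simp only [Finset.mul_sum, ← Finset.sum_add_distrib, ← Finset.sum_sub_distrib]
    refine Finset.sum_nonneg fun p _ => Finset.sum_nonneg fun q _ => ?_
    have gm : e p ^ μ * f q ^ (1 - μ) ≤ μ * e p + (1 - μ) * f q :=
      Real.geom_mean_le_arith_mean2_weighted hμ0 hν0 (he p) (hf q) (by ring)
    have hns : (0:ℝ) ≤ Complex.normSq (∑ i, (starRingEnd ℂ) (w i) * M i p * N i q) :=
      Complex.normSq_nonneg _
    nlinarith [mul_le_mul_of_nonneg_right gm hns]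

lemma pairPSD {A1 B1 A2 B2 : Matrix (Fin n) (Fin n) ℂ} (hA1 : A1.PosDef) (hB1 : B1.PosDef)
    (hA2 : A2.PosDef) (hB2 : B2.PosDef) (hAle : (A2 - A1).PosSemidef)
    (hBle : (B2 - B1).PosSemidef) {μ : ℝ} (hμ0 : 0 ≤ μ) (hμ1 : μ ≤ 1) :
    (A1 ⊙ B1 + A2 ⊙ B2 - geomMean μ A1 B1 ⊙ geomMean (1 - μ) A2 B2
      - geomMean μ A2 B2 ⊙ geomMean (1 - μ) A1 B1).PosSemidef := by
  have h1 := lemmaH hA1 hB1 hA2 hB2 hμ0 hμ1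
  have h2 := lemmaH hA2 hB2 hA1 hB1 hμ0 hμ1
  have h3 := posSemidef_hadamard hAle hBle
  have key : A1 ⊙ B1 + A2 ⊙ B2 - geomMean μ A1 B1 ⊙ geomMean (1 - μ) A2 B2
      - geomMean μ A2 B2 ⊙ geomMean (1 - μ) A1 B1
      = ((A2 - A1) ⊙ (B2 - B1))
        + (μ • (B1 ⊙ A2) + (1 - μ) • (A1 ⊙ B2) - geomMean μ A1 B1 ⊙ geomMean (1 - μ) A2 B2)
        + (μ • (B2 ⊙ A1) + (1 - μ) • (A2 ⊙ B1) - geomMean μ A2 B2 ⊙ geomMean (1 - μ) A1 B1) := by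
    ext i j
    simp only [Matrix.sub_apply, Matrix.add_apply, Matrix.hadamard_apply, Matrix.smul_apply,
      Complex.real_smul, Complex.ofReal_sub, Complex.ofReal_one]
    ring
  rw [key]
  exact (h3.add h1).add h2

lemma hadamard_sum_sum (x y : Fin n → ℝ) (M N : Fin n → Matrix (Fin n) (Fin n) ℂ) :
    (∑ j, x j • M j) ⊙ (∑ k, y k • N k) = ∑ j, ∑ k, (x j * y k) • (M j ⊙ N k) := by
  ext i l
  simp only [Matrix.sum_apply, Matrix.hadamard_apply, Matrix.smul_apply, Complex.real_smul,
    Finset.sum_mul, Finset.mul_sum]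
  rw [Finset.sum_comm]
  refine Finset.sum_congr rfl fun j _ => Finset.sum_congr rfl fun k _ => ?_
  push_cast
  ring

end Aux

/-- If `0 < A_1 ≤ ⋯ ≤ A_n` and `0 < B_1 ≤ ⋯ ≤ B_n` are positive definite matrices and the
`ω_j` are positive weights, then for every `μ ∈ [0,1]`,
`(∑ ω_j) • ∑ ω_j (A_j ∘ B_j) ≥ (∑ ω_j (A_j ♯_μ B_j)) ∘ (∑ ω_j (A_j ♯_{1-μ} B_j))`. -/
theorem chebyshev_hadamard_geomMean_discrete {n : ℕ}
    (A B : Fin n → Matrix (Fin n) (Fin n) ℂ)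
    (hApos : ∀ j, (A j).PosDef) (hBpos : ∀ j, (B j).PosDef)
    (hAinc : ∀ i j : Fin n, i ≤ j → (A j - A i).PosSemidef)
    (hBinc : ∀ i j : Fin n, i ≤ j → (B j - B i).PosSemidef)
    (ω : Fin n → ℝ) (hω : ∀ j, 0 < ω j) (μ : ℝ) (hμ : μ ∈ Set.Icc (0 : ℝ) 1) :
    ((∑ j, ω j) • ∑ j, ω j • (A j ⊙ B j) -
      (∑ j, ω j • geomMean μ (A j) (B j)) ⊙
        (∑ j, ω j • geomMean (1 - μ) (A j) (B j))).PosSemidef := by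
  obtain ⟨hμ0, hμ1⟩ := hμ
  have hD : (∑ j, ω j) • ∑ j, ω j • (A j ⊙ B j) -
      (∑ j, ω j • geomMean μ (A j) (B j)) ⊙ (∑ j, ω j • geomMean (1 - μ) (A j) (B j))
      = ∑ j, ∑ k, (ω j * ω k) •
          (A k ⊙ B k - geomMean μ (A j) (B j) ⊙ geomMean (1 - μ) (A k) (B k)) := by
    rw [hadamard_sum_sum, Finset.sum_smul]
    simp only [Finset.smul_sum, smul_smul]
    rw [← Finset.sum_sub_distrib]
    refine Finset.sum_congr rfl fun j _ => ?_
    rw [← Finset.sum_sub_distrib]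
    exact Finset.sum_congr rfl fun k _ => (smul_sub _ _ _).symm
  rw [hD]
  set S : Matrix (Fin n) (Fin n) ℂ := ∑ j, ∑ k, (ω j * ω k) •
      (A k ⊙ B k - geomMean μ (A j) (B j) ⊙ geomMean (1 - μ) (A k) (B k)) with hS
  have hswap : S = ∑ j, ∑ k, (ω j * ω k) •
      (A j ⊙ B j - geomMean μ (A k) (B k) ⊙ geomMean (1 - μ) (A j) (B j)) := by
    rw [hS, Finset.sum_comm]
    exact Finset.sum_congr rfl fun j _ => Finset.sum_congr rfl fun k _ => by rw [mul_comm]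
  have hSS : S + S = ∑ j, ∑ k, (ω j * ω k) •
      ((A k ⊙ B k - geomMean μ (A j) (B j) ⊙ geomMean (1 - μ) (A k) (B k))
        + (A j ⊙ B j - geomMean μ (A k) (B k) ⊙ geomMean (1 - μ) (A j) (B j))) := by
    nth_rewrite 2 [hswap]
    rw [hS, ← Finset.sum_add_distrib]
    refine Finset.sum_congr rfl fun j _ => ?_
    rw [← Finset.sum_add_distrib]
    exact Finset.sum_congr rfl fun k _ => (smul_add _ _ _).symm
  have hpair : ∀ j k : Fin n,
      ((A k ⊙ B k - geomMean μ (A j) (B j) ⊙ geomMean (1 - μ) (A k) (B k))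
        + (A j ⊙ B j - geomMean μ (A k) (B k) ⊙ geomMean (1 - μ) (A j) (B j))).PosSemidef := by
    intro j k
    rcases le_total j k with h | h
    · have hp := pairPSD (hApos j) (hBpos j) (hApos k) (hBpos k)
        (hAinc j k h) (hBinc j k h) hμ0 hμ1
      have heq : A j ⊙ B j + A k ⊙ B k - geomMean μ (A j) (B j) ⊙ geomMean (1 - μ) (A k) (B k)
          - geomMean μ (A k) (B k) ⊙ geomMean (1 - μ) (A j) (B j)
          = (A k ⊙ B k - geomMean μ (A j) (B j) ⊙ geomMean (1 - μ) (A k) (B k))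
            + (A j ⊙ B j - geomMean μ (A k) (B k) ⊙ geomMean (1 - μ) (A j) (B j)) := by
        abel
      rwa [heq] at hp
    · have hp := pairPSD (hApos k) (hBpos k) (hApos j) (hBpos j)
        (hAinc k j h) (hBinc k j h) hμ0 hμ1
      have heq : A k ⊙ B k + A j ⊙ B j - geomMean μ (A k) (B k) ⊙ geomMean (1 - μ) (A j) (B j)
          - geomMean μ (A j) (B j) ⊙ geomMean (1 - μ) (A k) (B k)
          = (A k ⊙ B k - geomMean μ (A j) (B j) ⊙ geomMean (1 - μ) (A k) (B k))
            + (A j ⊙ B j - geomMean μ (A k) (B k) ⊙ geomMean (1 - μ) (A j) (B j)) := by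
        abel
      rwa [heq] at hp
  have hSSpsd : (S + S).PosSemidef := by
    rw [hSS]
    refine posSemidef_sum _ _ fun j _ => posSemidef_sum _ _ fun k _ => ?_
    exact smul_posSemidef (hpair j k) (mul_nonneg (hω j).le (hω k).le)
  have hhalf : S = (2⁻¹ : ℝ) • (S + S) := by
    rw [← two_smul ℝ S, smul_smul]
    norm_num
  rw [hhalf]
  exact smul_posSemidef hSSpsd (by norm_num)
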